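/- There exists a G_δ set G ⊆ ω^ω × 2^ω such that every vertical section G_f is a null G_δ subset of 2^ω (with respect to the Haar/coin-flipping measure), and for every null set X ⊆ 2^ω there exists f ∈ ω^ω with X ⊆ G_f. That is, G is a G_δ universal set for the null ideal on Cantor space. -/

import Mathlib

open MeasureTheory

namespace ExistsGdeltaUniversalNull

noncomputable section

open scoped Classical

/-- Decode a natural number into an optional finite binary string (`none` codes `∅`). -/
def dec (n : ℕ) : Option (List Bool) :=
  (Encodable.decode (α := Option (List Bool)) n).join

/-- Encode an optional binary string. -/
def enc (o : Option (List Bool)) : ℕ := Encodable.encode o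

@[simp] lemma dec_enc (o : Option (List Bool)) : dec (enc o) = o := by
  simp [dec, enc]

/-- The basic cylinder determined by a finite binary string (`none` gives `∅`). -/
def cyl : Option (List Bool) → Set (ℕ → Bool)
  | none => ∅
  | some s => {y | ∀ i ∈ Finset.range s.length, y i = s.getD i false}

/-- The weight (= measure) of a cylinder. -/
def wt : Option (List Bool) → ENNReal
  | none => 0
  | some s => (1 / 2) ^ s.length

lemma measure_cyl (μ : Measure (ℕ → Bool))
    (hμ : ∀ (s : Finset ℕ) (f : ℕ → Bool),
      μ {x : ℕ → Bool | ∀ i ∈ s, x i = f i} = (1 / 2 : ENNReal) ^ s.card) :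
    ∀ o, μ (cyl o) = wt o
  | none => by simp [cyl, wt]
  | some s => by
      have := hμ (Finset.range s.length) (fun i => s.getD i false)
      simpa [cyl, wt] using this

lemma isOpen_cyl : ∀ o, IsOpen (cyl o)
  | none => isOpen_empty
  | some s => by
      have h : cyl (some s) =
          ⋂ i ∈ Finset.range s.length, (fun y : ℕ → Bool => y i) ⁻¹' {s.getD i false} := by
        ext y; simp [cyl]
      rw [h]
      exact isOpen_biInter_finset fun i _ =>
        (continuous_apply i).isOpen_preimage _ (isOpen_discrete _)

lemma mem_cyl_ofFn {y z : ℕ → Bool} {L : ℕ} :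
    z ∈ cyl (some (List.ofFn fun i : Fin L => y i)) ↔ ∀ i < L, z i = y i := by
  constructor
  · intro h i hi
    have := h i (by simpa using hi)
    simpa [List.getD_eq_getElem?_getD, List.getElem?_ofFn, hi] using this
  · intro h i hi
    rw [List.length_ofFn] at hi
    simp only [Finset.mem_range] at hi
    simp [List.getD_eq_getElem?_getD, List.getElem?_ofFn, hi, h i hi]

/-- The goodness condition: the prefix sums of the weights coded by `f` on row `n`
stay below `(1/2)^n`. -/
def good (f : ℕ → ℕ) (n k : ℕ) : Prop :=
  ∑ j ∈ Finset.range (k + 1), wt (dec (f (Nat.pair n j))) ≤ (1 / 2 : ENNReal) ^ n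

lemma good_mono {f : ℕ → ℕ} {n j k : ℕ} (h : good f n k) (hjk : j ≤ k) : good f n j :=
  le_trans (Finset.sum_le_sum_of_subset (Finset.range_subset_range.2 (by omega))) h

/-- The basic open pieces of the universal set. -/
def S (n k : ℕ) : Set ((ℕ → ℕ) × (ℕ → Bool)) :=
  {p | good p.1 n k ∧ p.2 ∈ cyl (dec (p.1 (Nat.pair n k)))}

/-- The universal G_δ set. -/
def G : Set ((ℕ → ℕ) × (ℕ → Bool)) := ⋂ n, ⋃ k, S n k

lemma isOpen_S (n k : ℕ) : IsOpen (S n k) := by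
  rw [isOpen_iff_mem_nhds]
  rintro ⟨f, y⟩ ⟨hg, hy⟩
  set V : Set (ℕ → ℕ) :=
    {g | ∀ j ∈ Finset.range (k + 1), g (Nat.pair n j) = f (Nat.pair n j)} with hV
  have hVopen : IsOpen V := by
    have h : V = ⋂ j ∈ Finset.range (k + 1),
        (fun g : ℕ → ℕ => g (Nat.pair n j)) ⁻¹' {f (Nat.pair n j)} := by
      ext g; simp [hV]
    rw [h]
    exact isOpen_biInter_finset fun j _ =>
      (continuous_apply _).isOpen_preimage _ (isOpen_discrete _)
  have hmem : (f, y) ∈ V ×ˢ cyl (dec (f (Nat.pair n k))) :=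
    ⟨fun j _ => rfl, hy⟩
  refine Filter.mem_of_superset
    ((hVopen.prod (isOpen_cyl _)).mem_nhds hmem) ?_
  rintro ⟨g, z⟩ ⟨hgV, hz⟩
  have hgV' : ∀ j ∈ Finset.range (k + 1), g (Nat.pair n j) = f (Nat.pair n j) := hgV
  have hk : g (Nat.pair n k) = f (Nat.pair n k) :=
    hgV' k (Finset.self_mem_range_succ k)
  refine ⟨?_, ?_⟩
  · show good g n k
    unfold good
    show (∑ j ∈ Finset.range (k + 1), wt (dec (g (Nat.pair n j)))) ≤ (1 / 2 : ENNReal) ^ n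
    rw [Finset.sum_congr rfl fun j hj => by rw [hgV' j hj]]
    exact hg
  · show z ∈ cyl (dec (g (Nat.pair n k)))
    rw [hk]; exact hz

/-- The vertical sections of the pieces. -/
def T (f : ℕ → ℕ) (n k : ℕ) : Set (ℕ → Bool) :=
  {y | good f n k ∧ y ∈ cyl (dec (f (Nat.pair n k)))}

lemma sec_eq (f : ℕ → ℕ) : {y : ℕ → Bool | (f, y) ∈ G} = ⋂ n, ⋃ k, T f n k := by
  ext y; simp [G, S, T]

lemma isOpen_T (f : ℕ → ℕ) (n k : ℕ) : IsOpen (T f n k) := by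
  by_cases h : good f n k
  · have : T f n k = cyl (dec (f (Nat.pair n k))) := by ext y; simp [T, h]
    rw [this]; exact isOpen_cyl _
  · have : T f n k = ∅ := by ext y; simp [T, h]
    rw [this]; exact isOpen_empty

lemma isGδ_G : IsGδ G :=
  IsGδ.iInter fun n => (isOpen_iUnion fun k => isOpen_S n k).isGδ

lemma isGδ_sec (f : ℕ → ℕ) : IsGδ {y : ℕ → Bool | (f, y) ∈ G} := by
  rw [sec_eq]
  exact IsGδ.iInter fun n => (isOpen_iUnion fun k => isOpen_T f n k).isGδ

lemma tsum_good_le (f : ℕ → ℕ) (n : ℕ) :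
    (∑' k : ℕ, if good f n k then wt (dec (f (Nat.pair n k))) else 0)
      ≤ (1 / 2 : ENNReal) ^ n := by
  rw [ENNReal.tsum_eq_iSup_sum]
  refine iSup_le fun F => ?_
  rw [← Finset.sum_filter]
  rcases (F.filter (good f n)).eq_empty_or_nonempty with h | h
  · rw [h]; simp
  · set M := (F.filter (good f n)).max' h with hM
    have hMgood : good f n M :=
      (Finset.mem_filter.1 ((F.filter (good f n)).max'_mem h)).2
    calc
      ∑ k ∈ F.filter (good f n), wt (dec (f (Nat.pair n k)))
          ≤ ∑ j ∈ Finset.range (M + 1), wt (dec (f (Nat.pair n j))) :=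
        Finset.sum_le_sum_of_subset fun x hx =>
          Finset.mem_range.2 (Nat.lt_succ_of_le (Finset.le_max' _ x hx))
      _ ≤ (1 / 2 : ENNReal) ^ n := hMgood

lemma sec_null (μ : Measure (ℕ → Bool))
    (hμ : ∀ (s : Finset ℕ) (f : ℕ → Bool),
      μ {x : ℕ → Bool | ∀ i ∈ s, x i = f i} = (1 / 2 : ENNReal) ^ s.card)
    (f : ℕ → ℕ) : μ {y : ℕ → Bool | (f, y) ∈ G} = 0 := by
  have hle : ∀ n, μ {y : ℕ → Bool | (f, y) ∈ G} ≤ (1 / 2 : ENNReal) ^ n := by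
    intro n
    have h1 : {y : ℕ → Bool | (f, y) ∈ G} ⊆ ⋃ k, T f n k := by
      rw [sec_eq]; exact Set.iInter_subset _ n
    have h2 : ∀ k, μ (T f n k) ≤ if good f n k then wt (dec (f (Nat.pair n k))) else 0 := by
      intro k
      by_cases h : good f n k
      · have : T f n k = cyl (dec (f (Nat.pair n k))) := by ext y; simp [T, h]
        rw [this, measure_cyl μ hμ, if_pos h]
      · have : T f n k = ∅ := by ext y; simp [T, h]
        rw [this, if_neg h]; simp
    calc
      μ {y : ℕ → Bool | (f, y) ∈ G} ≤ μ (⋃ k, T f n k) := measure_mono h1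
      _ ≤ ∑' k, μ (T f n k) := measure_iUnion_le _
      _ ≤ ∑' k : ℕ, if good f n k then wt (dec (f (Nat.pair n k))) else 0 :=
        ENNReal.tsum_le_tsum h2
      _ ≤ (1 / 2 : ENNReal) ^ n := tsum_good_le f n
  refine le_antisymm ?_ zero_le
  have ht : Filter.Tendsto (fun n : ℕ => (1 / 2 : ENNReal) ^ n) Filter.atTop (nhds 0) :=
    ENNReal.tendsto_pow_atTop_nhds_zero_of_lt_one (by norm_num)
  exact ge_of_tendsto' ht hle

/-- The key covering lemma: a null set can be covered, for each `n`, by a sequence of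
coded cylinders all of whose weight prefix sums are at most `(1/2)^n`. -/
lemma exists_codes (μ : Measure (ℕ → Bool))
    (hμ : ∀ (s : Finset ℕ) (f : ℕ → Bool),
      μ {x : ℕ → Bool | ∀ i ∈ s, x i = f i} = (1 / 2 : ENNReal) ^ s.card)
    (A : Set (ℕ → Bool)) (hA : μ A = 0) (n : ℕ) :
    ∃ c : ℕ → ℕ,
      (∀ k, ∑ j ∈ Finset.range (k + 1), wt (dec (c j)) ≤ (1 / 2 : ENNReal) ^ n) ∧
      ∀ y ∈ A, ∃ k, y ∈ cyl (dec (c k)) := by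
  classical
  -- μ is a probability measure
  have huniv : μ Set.univ = 1 := by
    have h := hμ ∅ (fun _ => false)
    have h0 : {x : ℕ → Bool | ∀ i ∈ (∅ : Finset ℕ), x i = false} = Set.univ := by
      ext x; simp
    rw [h0] at h; simpa using h
  haveI : IsProbabilityMeasure μ := ⟨huniv⟩
  -- outer regularity: find an open superset of small measure
  have hpos : (0 : ENNReal) < (1 / 2) ^ n := ENNReal.pow_pos (by norm_num) n
  obtain ⟨U, hAU, hUopen, hUlt⟩ :=
    Set.exists_isOpen_lt_of_lt A ((1 / 2 : ENNReal) ^ n) (by rw [hA]; exact hpos)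
  -- every point of U has a basic cylinder neighborhood inside U
  have hbasic : ∀ y ∈ U, ∃ L, cyl (some (List.ofFn fun i : Fin L => y i)) ⊆ U := by
    intro y hy
    obtain ⟨I, u, hu, hsub⟩ := isOpen_pi_iff.1 hUopen y hy
    refine ⟨I.sup id + 1, fun z hz => hsub ?_⟩
    intro i hi
    have hiL : i < I.sup id + 1 := Nat.lt_succ_of_le (Finset.le_sup (f := id) hi)
    have hz' : z i = y i := mem_cyl_ofFn.1 hz i hiL
    rw [hz']; exact (hu i hi).2
  -- the minimal-length cylinder around each point of U
  set N : ∀ y ∈ U, ℕ := fun y hy => Nat.find (hbasic y hy) with hN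
  set res : (ℕ → Bool) → ℕ → List Bool := fun y L => List.ofFn fun i : Fin L => y i with hres
  have hNspec : ∀ y (hy : y ∈ U), cyl (some (res y (N y hy))) ⊆ U := fun y hy =>
    Nat.find_spec (hbasic y hy)
  have hNmin : ∀ y (hy : y ∈ U), ∀ m, cyl (some (res y m)) ⊆ U → N y hy ≤ m := fun y hy m hm =>
    Nat.find_min' (hbasic y hy) hm
  set D : Set (List Bool) := {s | ∃ y, ∃ hy : y ∈ U, s = res y (N y hy)} with hD
  have hDsub : ∀ s ∈ D, cyl (some s) ⊆ U := by
    rintro s ⟨y, hy, rfl⟩; exact hNspec y hy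
  -- maximal cylinders are pairwise disjoint
  have key : ∀ y z (hy : y ∈ U) (hz : z ∈ U) (w : ℕ → Bool),
      N y hy ≤ N z hz →
      w ∈ cyl (some (res y (N y hy))) → w ∈ cyl (some (res z (N z hz))) →
      res y (N y hy) = res z (N z hz) := by
    intro y z hy hz w hle hwy hwz
    have hwy' := mem_cyl_ofFn.1 hwy
    have hwz' := mem_cyl_ofFn.1 hwz
    have hagree : ∀ i < N y hy, z i = y i := fun i hi =>
      ((hwz' i (lt_of_lt_of_le hi hle)).symm.trans (hwy' i hi))
    have hlist : res z (N y hy) = res y (N y hy) := by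
      simp only [hres]
      exact congrArg List.ofFn (funext fun i => hagree i i.isLt)
    have hz2 : cyl (some (res z (N y hy))) ⊆ U := by rw [hlist]; exact hNspec y hy
    have : N z hz ≤ N y hy := hNmin z hz _ hz2
    have heq : N y hy = N z hz := le_antisymm hle this
    rw [← heq, hlist]
  have hDdisj : ∀ s ∈ D, ∀ t ∈ D, s ≠ t → Disjoint (cyl (some s)) (cyl (some t)) := by
    rintro s ⟨y, hy, rfl⟩ t ⟨z, hz, rfl⟩ hst
    rw [Set.disjoint_left]
    intro w hws hwt
    rcases le_total (N y hy) (N z hz) with hle | hle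
    · exact hst (key y z hy hz w hle hws hwt)
    · exact hst ((key z y hz hy w hle hwt hws).symm)
  -- every point of U lies in one of the maximal cylinders
  have hcov : ∀ y ∈ U, ∃ s ∈ D, y ∈ cyl (some s) := by
    intro y hy
    refine ⟨res y (N y hy), ⟨y, hy, rfl⟩, ?_⟩
    exact mem_cyl_ofFn.2 fun i _ => rfl
  -- enumerate D
  obtain ⟨φ, hφ⟩ : ∃ φ : ↥D → ℕ, Function.Injective φ :=
    Set.countable_iff_exists_injective.1 (Set.to_countable D)
  set E : ℕ → Option (List Bool) :=
    fun k => (Function.partialInv φ k).map Subtype.val with hE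
  have hEinD : ∀ k s, E k = some s → s ∈ D := by
    intro k s hks
    simp only [hE, Option.map_eq_some_iff] at hks
    obtain ⟨d, _, rfl⟩ := hks
    exact d.2
  have hEsub : ∀ k, cyl (E k) ⊆ U := by
    intro k
    cases h : E k with
    | none => simp [cyl]
    | some s => exact hDsub s (hEinD k s h)
  have hEinj : ∀ k l s, E k = some s → E l = some s → k = l := by
    intro k l s hk hl
    simp only [hE, Option.map_eq_some_iff] at hk hl
    obtain ⟨d, hd, hd2⟩ := hk
    obtain ⟨d', hd', hd2'⟩ := hl
    have hdd : d = d' := Subtype.ext (hd2.trans hd2'.symm)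
    have h1 : φ d = k := (Function.partialInv_of_injective hφ d k).1 hd
    have h2 : φ d' = l := (Function.partialInv_of_injective hφ d' l).1 hd'
    rw [← h1, ← h2, hdd]
  have hEsurj : ∀ s (hs : s ∈ D), E (φ ⟨s, hs⟩) = some s := by
    intro s hs
    simp [hE, Function.partialInv_left hφ]
  refine ⟨fun k => enc (E k), ?_, ?_⟩
  · intro k
    have hmeas : ∀ j ∈ Finset.range (k + 1), MeasurableSet (cyl (E j)) := by
      intro j _
      cases h : E j with
      | none => simp [cyl]
      | some s =>
          have hmc : cyl (some s) =
              ⋂ i ∈ Finset.range s.length,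
                (fun y : ℕ → Bool => y i) ⁻¹' {s.getD i false} := by
            ext y; simp [cyl]
          rw [hmc]
          exact MeasurableSet.biInter (Finset.range s.length).countable_toSet
            fun i _ => measurable_pi_apply i (measurableSet_singleton _)
    have hdisj : (↑(Finset.range (k + 1)) : Set ℕ).PairwiseDisjoint fun j => cyl (E j) := by
      intro i _ j _ hij
      simp only [Function.onFun]
      cases hi : E i with
      | none => simp [cyl]
      | some s =>
          cases hj : E j with
          | none => simp [cyl]
          | some t =>
              have hst : s ≠ t := by
                intro h; exact hij (hEinj i j s hi (by rw [hj, h]))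
              exact hDdisj s (hEinD i s hi) t (hEinD j t hj) hst
    calc
      ∑ j ∈ Finset.range (k + 1), wt (dec (enc (E j)))
          = ∑ j ∈ Finset.range (k + 1), μ (cyl (E j)) := by
            refine Finset.sum_congr rfl fun j _ => ?_
            rw [dec_enc, measure_cyl μ hμ]
      _ = μ (⋃ j ∈ Finset.range (k + 1), cyl (E j)) :=
            (measure_biUnion_finset hdisj hmeas).symm
      _ ≤ μ U := measure_mono (Set.iUnion₂_subset fun j _ => hEsub j)
      _ ≤ (1 / 2 : ENNReal) ^ n := hUlt.le
  · intro y hy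
    obtain ⟨s, hs, hys⟩ := hcov y (hAU hy)
    exact ⟨φ ⟨s, hs⟩, by rw [dec_enc, hEsurj s hs]; exact hys⟩

end

end ExistsGdeltaUniversalNull

open ExistsGdeltaUniversalNull

/-- For the Haar (coin-flipping) measure `μ` on Cantor space `2^ω`, there is a
G_δ set `G ⊆ ω^ω × 2^ω` all of whose vertical sections are null G_δ sets and
such that every `μ`-null set is contained in some section; i.e. `G` is a G_δ
universal set for the null ideal. -/
theorem exists_Gdelta_universal_null
    (μ : Measure (ℕ → Bool))
    (hμ : ∀ (s : Finset ℕ) (f : ℕ → Bool),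
      μ {x : ℕ → Bool | ∀ i ∈ s, x i = f i} = (1 / 2 : ENNReal) ^ s.card) :
    ∃ G : Set ((ℕ → ℕ) × (ℕ → Bool)), IsGδ G ∧
      (∀ f : ℕ → ℕ, IsGδ {y : ℕ → Bool | (f, y) ∈ G} ∧ μ {y : ℕ → Bool | (f, y) ∈ G} = 0) ∧
      ∀ A : Set (ℕ → Bool), μ A = 0 → ∃ f : ℕ → ℕ, A ⊆ {y : ℕ → Bool | (f, y) ∈ G} := by
  classical
  refine ⟨G, isGδ_G, fun f => ⟨isGδ_sec f, sec_null μ hμ f⟩, ?_⟩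
  intro A hA
  choose c hc1 hc2 using fun n => exists_codes μ hμ A hA n
  refine ⟨fun m => c m.unpair.1 m.unpair.2, fun y hy => ?_⟩
  have hval : ∀ n j : ℕ,
      (fun m : ℕ => c m.unpair.1 m.unpair.2) (Nat.pair n j) = c n j := by
    intro n j; simp [Nat.unpair_pair]
  simp only [Set.mem_setOf_eq, sec_eq, Set.mem_iInter, Set.mem_iUnion]
  intro n
  obtain ⟨k, hk⟩ := hc2 n y hy
  refine ⟨k, ?_, ?_⟩
  · unfold good
    rw [Finset.sum_congr rfl fun j _ => by rw [hval n j]]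
    exact hc1 n k
  · rw [hval n k]; exact hk
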